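/- Let V and W be finite-dimensional real vector spaces, let P ⊆ V be a polytope (the convex hull of a finite set) with affineSpan ℝ P = ⊤, and let Q ⊆ W be a nonempty polytope. Then the hom-polytope Hom(P,Q) = {f : V →ᵃ[ℝ] W | f '' P ⊆ Q} is a polytope in the real vector space of affine maps from V to W: there exists a finite set F of affine maps V →ᵃ[ℝ] W such that Hom(P,Q) = convexHull ℝ F. -/

import Mathlib

/-- A polytope: the convex hull of a finite set of points. -/
def IsPolytope {V : Type*} [AddCommGroup V] [Module ℝ V] (P : Set V) : Prop :=
  ∃ F : Finset V, P = convexHull ℝ (F : Set V)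


open Finset

section Slice

variable {V : Type*} [AddCommGroup V] [Module ℝ V]

private lemma sum_split {α : Type*} {M : Type*} [DecidableEq α] [AddCommMonoid M]
    {S : Finset α} {a b : α} (ha : a ∈ S) (hb : b ∈ S) (hab : a ≠ b) (f : α → M) :
    ∑ v ∈ S, f v = f a + f b + ∑ v ∈ (S.erase a).erase b, f v := by
  have hb' : b ∈ S.erase a := Finset.mem_erase.2 ⟨hab.symm, hb⟩
  rw [← Finset.add_sum_erase _ f ha, ← Finset.add_sum_erase _ f hb', add_assoc]

/-- The point where the segment `[a, b]` crosses the hyperplane `ℓ = c`. -/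
noncomputable def crossPt (ℓ : V →ₗ[ℝ] ℝ) (c : ℝ) (a b : V) : V :=
  ((ℓ b - c) / (ℓ b - ℓ a)) • a + ((c - ℓ a) / (ℓ b - ℓ a)) • b

set_option maxHeartbeats 1000000 in
theorem key_slice (F : Finset V) (ℓ : V →ₗ[ℝ] ℝ) (c : ℝ) :
    ∃ G : Finset V,
      convexHull ℝ (F : Set V) ∩ {x | ℓ x = c} = convexHull ℝ (G : Set V) := by
  classical
  set G : Finset V :=
    (F.filter fun v => ℓ v = c) ∪
      ((F ×ˢ F).filter fun p => ℓ p.1 < c ∧ c < ℓ p.2).image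
        (fun p => crossPt ℓ c p.1 p.2) with hG
  refine ⟨G, subset_antisymm ?_ ?_⟩
  · -- hard direction
    rintro x ⟨hxF, hxc⟩
    rw [Finset.convexHull_eq] at hxF
    obtain ⟨w, hw0, hw1, hwx⟩ := hxF
    rw [Finset.centerMass_eq_of_sum_1 _ _ hw1] at hwx
    simp only [id] at hwx
    have main : ∀ (n : ℕ) (S : Finset V), S.card ≤ n → S ⊆ F → ∀ w : V → ℝ,
        (∀ v ∈ S, 0 ≤ w v) → ∑ v ∈ S, w v = 1 → ∑ v ∈ S, w v * ℓ v = c →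
        (∑ v ∈ S, w v • v) ∈ convexHull ℝ (G : Set V) := by
      intro n
      induction n with
      | zero =>
        intro S hcard _ w _ hw1 _
        have : S = ∅ := Finset.card_eq_zero.1 (Nat.le_zero.1 hcard)
        subst this
        simp at hw1
      | succ n ih =>
        intro S hcard hSF w hw0 hw1 hwc
        by_cases hall : ∀ v ∈ S, w v ≠ 0 → ℓ v = c
        · -- all points with nonzero weight lie on the hyperplane
          set T := S.filter fun v => w v ≠ 0 with hT
          have hsub : ∀ v ∈ S, w v • v ≠ 0 → w v ≠ 0 := by
            intro v _ h hv; exact h (by rw [hv, zero_smul])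
          have hsum1 : ∑ v ∈ T, w v • v = ∑ v ∈ S, w v • v :=
            Finset.sum_filter_of_ne hsub
          have hsum2 : ∑ v ∈ T, w v = ∑ v ∈ S, w v :=
            Finset.sum_filter_of_ne (by intro v _ h; exact h)
          rw [← hsum1]
          have hTmem : ∀ v ∈ T, v ∈ (G : Set V) := by
            intro v hv
            rw [hT, Finset.mem_filter] at hv
            exact Finset.mem_coe.2 (Finset.mem_union.2 (Or.inl
              (Finset.mem_filter.2 ⟨hSF hv.1, hall v hv.1 hv.2⟩)))
          have := T.centerMass_mem_convexHull (fun v hv => hw0 v (Finset.mem_filter.1 hv).1)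
            (by rw [hsum2, hw1]; norm_num) hTmem
          rwa [Finset.centerMass_eq_of_sum_1 _ _ (by rw [hsum2, hw1])] at this
        · push_neg at hall
          obtain ⟨u, huS, hu0, huc⟩ := hall
          have hlow : ∃ a ∈ S, 0 < w a ∧ ℓ a < c := by
            by_contra hcon
            push_neg at hcon
            have hcle : ∀ v ∈ S, w v * c ≤ w v * ℓ v := by
              intro v hv
              rcases eq_or_lt_of_le (hw0 v hv) with h | h
              · rw [← h]; simp
              · exact mul_le_mul_of_nonneg_left (hcon v hv h) (le_of_lt h)
            have : ∑ v ∈ S, w v * c < ∑ v ∈ S, w v * ℓ v := by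
              refine Finset.sum_lt_sum hcle ⟨u, huS, ?_⟩
              have hwu : 0 < w u := lt_of_le_of_ne (hw0 u huS) (Ne.symm hu0)
              have : c < ℓ u := lt_of_le_of_ne (hcon u huS hwu) (Ne.symm huc)
              exact mul_lt_mul_of_pos_left this hwu
            rw [← Finset.sum_mul, hw1, one_mul, hwc] at this
            exact lt_irrefl c this
          have hhigh : ∃ b ∈ S, 0 < w b ∧ c < ℓ b := by
            by_contra hcon
            push_neg at hcon
            have hcle : ∀ v ∈ S, w v * ℓ v ≤ w v * c := by
              intro v hv
              rcases eq_or_lt_of_le (hw0 v hv) with h | h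
              · rw [← h]; simp
              · exact mul_le_mul_of_nonneg_left (hcon v hv h) (le_of_lt h)
            obtain ⟨a, haS, hwa, hac⟩ := hlow
            have : ∑ v ∈ S, w v * ℓ v < ∑ v ∈ S, w v * c :=
              Finset.sum_lt_sum hcle ⟨a, haS, mul_lt_mul_of_pos_left hac hwa⟩
            rw [← Finset.sum_mul, hw1, one_mul, hwc] at this
            exact lt_irrefl c this
          obtain ⟨a, haS, hwa, hac⟩ := hlow
          obtain ⟨b, hbS, hwb, hcb⟩ := hhigh
          have hab : a ≠ b := fun h => absurd (h ▸ hac) (not_lt.2 (le_of_lt hcb))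
          have hd : 0 < ℓ b - ℓ a := by linarith
          have hdne : ℓ b - ℓ a ≠ 0 := ne_of_gt hd
          set θ : ℝ := (ℓ b - c) / (ℓ b - ℓ a) with hθ
          have hθpos : 0 < θ := div_pos (by linarith) hd
          have hθlt : θ < 1 := by
            rw [hθ, div_lt_one hd]; linarith
          have h1θ : 0 < 1 - θ := by linarith
          have hθ1 : 1 - θ = (c - ℓ a) / (ℓ b - ℓ a) := by
            rw [hθ]; field_simp; ring
          have hθc : θ * ℓ a + (1 - θ) * ℓ b = c := by
            rw [hθ1, hθ]; field_simp; ring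
          set z : V := crossPt ℓ c a b with hz
          have hzeq : z = θ • a + (1 - θ) • b := by
            rw [hz, crossPt, hθ1]
          have hzG : z ∈ (G : Set V) := by
            refine Finset.mem_coe.2 (Finset.mem_union.2 (Or.inr
              (Finset.mem_image.2 ⟨(a, b), ?_, rfl⟩)))
            exact Finset.mem_filter.2 ⟨Finset.mem_product.2 ⟨hSF haS, hSF hbS⟩, hac, hcb⟩
          set m : ℝ := min (w a / θ) (w b / (1 - θ)) with hm
          have hmpos : 0 < m :=
            lt_min (div_pos hwa hθpos) (div_pos hwb h1θ)
          have hma : θ * m ≤ w a := by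
            have h := min_le_left (w a / θ) (w b / (1 - θ))
            calc θ * m ≤ θ * (w a / θ) := mul_le_mul_of_nonneg_left h (le_of_lt hθpos)
            _ = w a := mul_div_cancel₀ (w a) (ne_of_gt hθpos)
          have hmb : (1 - θ) * m ≤ w b := by
            have h := min_le_right (w a / θ) (w b / (1 - θ))
            calc (1 - θ) * m ≤ (1 - θ) * (w b / (1 - θ)) :=
              mul_le_mul_of_nonneg_left h (le_of_lt h1θ)
            _ = w b := mul_div_cancel₀ (w b) (ne_of_gt h1θ)
          have habS : w a + w b ≤ 1 := by
            rw [← hw1, sum_split haS hbS hab w]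
            have : 0 ≤ ∑ v ∈ (S.erase a).erase b, w v :=
              Finset.sum_nonneg fun v hv =>
                hw0 v (Finset.mem_of_mem_erase (Finset.mem_of_mem_erase hv))
            linarith
          have hm1 : m ≤ 1 := by nlinarith
          -- reduced weights
          set w' : V → ℝ := fun v =>
            if v = a then w a - θ * m else if v = b then w b - (1 - θ) * m else w v with hw'
          have hw'a : w' a = w a - θ * m := by rw [hw']; simp
          have hw'b : w' b = w b - (1 - θ) * m := by
            rw [hw']; simp [hab.symm]
          have hw'other : ∀ v, v ≠ a → v ≠ b → w' v = w v := by
            intro v h1 h2; rw [hw']; simp [h1, h2]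
          have hw'0 : ∀ v ∈ S, 0 ≤ w' v := by
            intro v hv
            by_cases h1 : v = a
            · rw [h1, hw'a]; linarith
            · by_cases h2 : v = b
              · rw [h2, hw'b]; linarith
              · rw [hw'other v h1 h2]; exact hw0 v hv
          -- sums over the rest agree
          have hrw : ∑ v ∈ (S.erase a).erase b, w' v = ∑ v ∈ (S.erase a).erase b, w v :=
            Finset.sum_congr rfl fun v hv => by
              have h2 := (Finset.mem_erase.1 hv).1
              have h1 := (Finset.mem_erase.1 (Finset.mem_of_mem_erase hv)).1
              exact hw'other v h1 h2
          have hrwv : ∑ v ∈ (S.erase a).erase b, w' v • v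
              = ∑ v ∈ (S.erase a).erase b, w v • v :=
            Finset.sum_congr rfl fun v hv => by
              have h2 := (Finset.mem_erase.1 hv).1
              have h1 := (Finset.mem_erase.1 (Finset.mem_of_mem_erase hv)).1
              rw [hw'other v h1 h2]
          have hrwl : ∑ v ∈ (S.erase a).erase b, w' v * ℓ v
              = ∑ v ∈ (S.erase a).erase b, w v * ℓ v :=
            Finset.sum_congr rfl fun v hv => by
              have h2 := (Finset.mem_erase.1 hv).1
              have h1 := (Finset.mem_erase.1 (Finset.mem_of_mem_erase hv)).1
              rw [hw'other v h1 h2]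
          have hsum' : ∑ v ∈ S, w' v = 1 - m := by
            rw [sum_split haS hbS hab w', hw'a, hw'b, hrw]
            rw [sum_split haS hbS hab w] at hw1
            linarith
          have hvec' : ∑ v ∈ S, w' v • v = (∑ v ∈ S, w v • v) - m • z := by
            have h1 := sum_split haS hbS hab (fun v => w' v • v)
            have h2 := sum_split haS hbS hab (fun v => w v • v)
            rw [h1, h2, hw'a, hw'b, hrwv, hzeq]
            module
          have hl' : ∑ v ∈ S, w' v * ℓ v = c - m * c := by
            have h1 := sum_split haS hbS hab (fun v => w' v * ℓ v)
            rw [h1, hw'a, hw'b, hrwl]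
            have h2 := sum_split haS hbS hab (fun v => w v * ℓ v)
            rw [h2] at hwc
            have hmc : (θ * ℓ a + (1 - θ) * ℓ b) * m = c * m := by rw [hθc]
            linear_combination hwc - hmc
          -- one of the two reduced weights vanishes
          set v₀ : V := if w a / θ ≤ w b / (1 - θ) then a else b with hv₀
          have hv₀S : v₀ ∈ S := by
            rw [hv₀]; split <;> assumption
          have hw'v₀ : w' v₀ = 0 := by
            rw [hv₀]
            split
            · rename_i h
              rw [hw'a, hm, min_eq_left h, mul_div_cancel₀ (w a) (ne_of_gt hθpos)]
              ring
            · rename_i h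
              rw [hw'b, hm, min_eq_right (le_of_lt (not_le.1 h)),
                mul_div_cancel₀ (w b) (ne_of_gt h1θ)]
              ring
          rcases eq_or_lt_of_le hm1 with hme | hmlt
          · have hz0 : ∑ v ∈ S, w' v = 0 := by rw [hsum', hme]; ring
            have hall0 : ∀ v ∈ S, w' v = 0 :=
              (Finset.sum_eq_zero_iff_of_nonneg hw'0).1 hz0
            have hv0 : ∑ v ∈ S, w' v • v = 0 :=
              Finset.sum_eq_zero (fun v hv => by rw [hall0 v hv, zero_smul])
            rw [hvec', sub_eq_zero] at hv0
            rw [hv0, hme, one_smul]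
            exact subset_convexHull ℝ _ hzG
          · have h1m : 0 < 1 - m := by linarith
            set S' := S.erase v₀ with hS'
            have hcard' : S'.card ≤ n := by
              have h1 : S'.card < S.card := Finset.card_erase_lt_of_mem hv₀S
              omega
            set w'' : V → ℝ := fun v => w' v / (1 - m) with hw''
            have hesum : ∑ v ∈ S', w' v = ∑ v ∈ S, w' v :=
              Finset.sum_erase _ (by rw [hw'v₀])
            have hevec : ∑ v ∈ S', w' v • v = ∑ v ∈ S, w' v • v :=
              Finset.sum_erase _ (by rw [hw'v₀, zero_smul])
            have hel : ∑ v ∈ S', w' v * ℓ v = ∑ v ∈ S, w' v * ℓ v :=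
              Finset.sum_erase _ (by rw [hw'v₀, zero_mul])
            have hsum'' : ∑ v ∈ S', w'' v = 1 := by
              have : ∑ v ∈ S', w'' v = (1 - m)⁻¹ * ∑ v ∈ S', w' v := by
                rw [Finset.mul_sum]
                exact Finset.sum_congr rfl fun v hv => by rw [hw'']; ring
              rw [this, hesum, hsum']
              field_simp
            have hlsum'' : ∑ v ∈ S', w'' v * ℓ v = c := by
              have h3 : ∑ v ∈ S', w'' v * ℓ v = (1 - m)⁻¹ * ∑ v ∈ S', w' v * ℓ v := by
                rw [Finset.mul_sum]
                exact Finset.sum_congr rfl fun v hv => by rw [hw'']; ring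
              rw [h3, hel, hl']
              have : c - m * c = (1 - m) * c := by ring
              rw [this, ← mul_assoc, inv_mul_cancel₀ (ne_of_gt h1m), one_mul]
            have hy := ih S' hcard' (fun v hv => hSF (Finset.mem_of_mem_erase hv)) w''
              (fun v hv => div_nonneg (hw'0 v (Finset.mem_of_mem_erase hv)) (le_of_lt h1m))
              hsum'' hlsum''
            have hyvec : ∑ v ∈ S', w'' v • v = (1 - m)⁻¹ • ∑ v ∈ S', w' v • v := by
              rw [Finset.smul_sum]
              exact Finset.sum_congr rfl fun v hv => by
                rw [hw'']
                simp only [div_eq_mul_inv, mul_comm _ ((1 - m)⁻¹), mul_smul]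
            rw [hyvec, hevec, hvec'] at hy
            have hxeq : ∑ v ∈ S, w v • v =
                m • z + (1 - m) • ((1 - m)⁻¹ • ((∑ v ∈ S, w v • v) - m • z)) := by
              rw [smul_smul, mul_inv_cancel₀ (ne_of_gt h1m), one_smul]
              abel
            rw [hxeq]
            exact (convex_convexHull ℝ (G : Set V)) (subset_convexHull ℝ _ hzG) hy
              (le_of_lt hmpos) (le_of_lt h1m) (by ring)
    have hlx : ∑ v ∈ F, w v * ℓ v = c := by
      have : ℓ (∑ v ∈ F, w v • v) = ∑ v ∈ F, w v * ℓ v := by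
        rw [map_sum]
        exact Finset.sum_congr rfl fun v hv => by rw [map_smul, smul_eq_mul]
      rw [← this, hwx]
      exact hxc
    have := main F.card F le_rfl (Finset.Subset.refl F) w hw0 hw1 hlx
    rwa [hwx] at this
  · -- easy direction
    refine convexHull_min ?_ ((convex_convexHull ℝ (F : Set V)).inter
      (convex_hyperplane ℓ.isLinear c))
    intro v hv
    simp only [hG, Finset.coe_union, Set.mem_union, Finset.mem_coe] at hv
    rcases hv with hv | hv
    · rw [Finset.mem_filter] at hv
      exact ⟨subset_convexHull ℝ _ hv.1, hv.2⟩
    · rw [Finset.mem_image] at hv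
      obtain ⟨⟨a, b⟩, hab, rfl⟩ := hv
      rw [Finset.mem_filter, Finset.mem_product] at hab
      obtain ⟨⟨haF, hbF⟩, hac, hcb⟩ := hab
      simp only at haF hbF hac hcb
      have hd : 0 < ℓ b - ℓ a := by linarith
      have hdne : ℓ b - ℓ a ≠ 0 := ne_of_gt hd
      refine ⟨?_, ?_⟩
      · refine (convex_convexHull ℝ (F : Set V)) (subset_convexHull ℝ _ haF)
          (subset_convexHull ℝ _ hbF) (div_nonneg (by linarith) (le_of_lt hd))
          (div_nonneg (by linarith) (le_of_lt hd)) ?_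
        field_simp; ring
      · show ℓ _ = c
        rw [crossPt]
        simp only [map_add, map_smul, smul_eq_mul]
        field_simp
        ring

end Slice


section Subspace

variable {X : Type*} [AddCommGroup X] [Module ℝ X] [FiniteDimensional ℝ X]

theorem subspace_eq_inter_ker (R : Submodule ℝ X) :
    ∃ (k : ℕ) (L : Fin k → X →ₗ[ℝ] ℝ), (R : Set X) = {x | ∀ i, L i x = 0} := by
  haveI := Module.Free.of_divisionRing ℝ R.dualAnnihilator
  haveI : Module.Finite ℝ R.dualAnnihilator := inferInstance
  let bk := Module.finBasis ℝ R.dualAnnihilator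
  refine ⟨Module.finrank ℝ R.dualAnnihilator, fun i => (bk i : Module.Dual ℝ X), ?_⟩
  ext x
  simp only [SetLike.mem_coe, Set.mem_setOf_eq]
  constructor
  · intro hx i
    have hmem : (bk i : Module.Dual ℝ X) ∈ R.dualAnnihilator := (bk i).2
    rw [Submodule.mem_dualAnnihilator] at hmem
    exact hmem x hx
  · intro hx
    rw [← Subspace.forall_mem_dualAnnihilator_apply_eq_zero_iff R x]
    intro φ hφ
    set g : R.dualAnnihilator →ₗ[ℝ] ℝ :=
      (Module.Dual.eval ℝ X x).comp R.dualAnnihilator.subtype with hg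
    have hgz : g = 0 := by
      apply bk.ext
      intro i
      simp only [hg, LinearMap.comp_apply, Submodule.subtype_apply, LinearMap.flip_apply,
        Module.Dual.eval_apply, LinearMap.zero_apply]
      exact hx i
    have := congrArg (fun (h : R.dualAnnihilator →ₗ[ℝ] ℝ) => h ⟨φ, hφ⟩) hgz
    simpa [hg] using this

end Subspace


section Many

variable {X : Type*} [AddCommGroup X] [Module ℝ X]

theorem key_slice_many (F : Finset X) {k : ℕ} (L : Fin k → X →ₗ[ℝ] ℝ) :
    ∃ G : Finset X,
      convexHull ℝ (F : Set X) ∩ {x | ∀ i, L i x = 0} = convexHull ℝ (G : Set X) := by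
  classical
  have main : ∀ s : Finset (Fin k), ∃ G : Finset X,
      convexHull ℝ (F : Set X) ∩ {x | ∀ i ∈ s, L i x = 0} = convexHull ℝ (G : Set X) := by
    intro s
    induction s using Finset.induction_on with
    | empty => exact ⟨F, by simp⟩
    | @insert j s hj ih =>
      obtain ⟨G', hG'⟩ := ih
      obtain ⟨G'', hG''⟩ := key_slice G' (L j) 0
      refine ⟨G'', ?_⟩
      rw [← hG'', ← hG']
      ext x
      simp only [Set.mem_inter_iff, Set.mem_setOf_eq, Finset.mem_insert]
      constructor
      · rintro ⟨hx, hall⟩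
        exact ⟨⟨hx, fun i hi => hall i (Or.inr hi)⟩, hall j (Or.inl rfl)⟩
      · rintro ⟨⟨hx, hall⟩, hj0⟩
        refine ⟨hx, fun i hi => ?_⟩
        rcases hi with rfl | hi
        · exact hj0
        · exact hall i hi
  obtain ⟨G, hGeq⟩ := main Finset.univ
  refine ⟨G, ?_⟩
  rw [← hGeq]
  simp
end Many

theorem stmt_6 {V W : Type*}
    [AddCommGroup V] [Module ℝ V] [FiniteDimensional ℝ V]
    [AddCommGroup W] [Module ℝ W] [FiniteDimensional ℝ W]
    (P : Set V) (Q : Set W)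
    (hP : IsPolytope P) (hPspan : affineSpan ℝ P = ⊤)
    (hQ : IsPolytope Q) (hQne : Q.Nonempty) :
    ∃ F : Finset (V →ᵃ[ℝ] W),
      {f : V →ᵃ[ℝ] W | f '' P ⊆ Q} = convexHull ℝ (F : Set (V →ᵃ[ℝ] W)) := by
  classical
  obtain ⟨Fp, hFp⟩ := hP
  obtain ⟨Gq, hGq⟩ := hQ
  have hQconv : Convex ℝ Q := hGq ▸ convex_convexHull ℝ _
  -- the evaluation map on the vertices of P
  set φ : (V →ᵃ[ℝ] W) →ₗ[ℝ] (↥Fp → W) :=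
    { toFun := fun f i => f i.1
      map_add' := fun f g => by ext i; simp
      map_smul' := fun c f => by ext i; simp } with hφ
  -- P is the convex hull of Fp, so membership of image in Q reduces to vertices
  have hSdesc : {f : V →ᵃ[ℝ] W | f '' P ⊆ Q} = φ ⁻¹' (Set.univ.pi fun _ : ↥Fp => Q) := by
    ext f
    simp only [Set.mem_setOf_eq, Set.mem_preimage, Set.mem_pi, Set.mem_univ, forall_true_left]
    constructor
    · intro h i
      exact h ⟨i.1, by rw [hFp]; exact subset_convexHull ℝ _ i.2, rfl⟩
    · intro h
      rw [hFp, AffineMap.image_convexHull]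
      refine convexHull_min ?_ hQconv
      rintro y ⟨v, hv, rfl⟩
      exact h ⟨v, hv⟩
  -- the product polytope
  have hK : (Set.univ.pi fun _ : ↥Fp => Q) =
      convexHull ℝ ((Fintype.piFinset fun _ : ↥Fp => Gq : Finset (↥Fp → W)) : Set (↥Fp → W)) := by
    rw [Fintype.coe_piFinset, convexHull_pi, ← hGq]
  -- the range of φ cut out by functionals
  obtain ⟨k, L, hL⟩ := subspace_eq_inter_ker (LinearMap.range φ)
  obtain ⟨H, hH⟩ := key_slice_many (Fintype.piFinset fun _ : ↥Fp => Gq) L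
  -- φ is injective
  have hinj : Function.Injective φ := by
    intro f g h
    have hag : ∀ v ∈ Fp, f v = g v := by
      intro v hv
      exact congrFun h ⟨v, hv⟩
    -- the equalizer is an affine subspace
    set E : AffineSubspace ℝ V :=
      { carrier := {x | f x = g x}
        smul_vsub_vadd_mem' := by
          intro c p q r hp hq hr
          simp only [Set.mem_setOf_eq] at hp hq hr ⊢
          have hf : f (c • (p -ᵥ q) +ᵥ r) = c • (f p -ᵥ f q) +ᵥ f r := by
            rw [AffineMap.map_vadd, LinearMap.map_smul, AffineMap.linearMap_vsub]
          have hg' : g (c • (p -ᵥ q) +ᵥ r) = c • (g p -ᵥ g q) +ᵥ g r := by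
            rw [AffineMap.map_vadd, LinearMap.map_smul, AffineMap.linearMap_vsub]
          rw [hf, hg', hp, hq, hr] } with hE
    have hPE : affineSpan ℝ (Fp : Set V) ≤ E := by
      rw [affineSpan_le]
      intro v hv
      exact hag v hv
    have hsp : affineSpan ℝ (Fp : Set V) = ⊤ := by
      rw [← affineSpan_convexHull, ← hFp, hPspan]
    rw [hsp] at hPE
    ext x
    exact hPE (AffineSubspace.mem_top ℝ V x)
  -- image of the hom-set under φ
  have himg : φ '' {f : V →ᵃ[ℝ] W | f '' P ⊆ Q} =
      convexHull ℝ ((Fintype.piFinset fun _ : ↥Fp => Gq : Finset (↥Fp → W)) : Set (↥Fp → W)) ∩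
        {x | ∀ i, L i x = 0} := by
    ext x
    constructor
    · rintro ⟨f, hf, rfl⟩
      rw [hSdesc] at hf
      refine ⟨?_, ?_⟩
      · rw [← hK]; exact hf
      · have hmem : φ f ∈ (LinearMap.range φ : Set (↥Fp → W)) := ⟨f, rfl⟩
        rw [hL] at hmem
        exact hmem
    · rintro ⟨hx1, hx2⟩
      have : x ∈ (LinearMap.range φ : Set (↥Fp → W)) := by rw [hL]; exact hx2
      obtain ⟨f, rfl⟩ := this
      refine ⟨f, ?_, rfl⟩
      rw [hSdesc, Set.mem_preimage, hK]
      exact hx1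
  rw [hH] at himg
  -- pull the vertex set H back through φ
  have hHrange : ∀ h ∈ H, ∃ f : V →ᵃ[ℝ] W, φ f = h := by
    intro h hh
    have : (h : ↥Fp → W) ∈ (LinearMap.range φ : Set (↥Fp → W)) := by
      rw [hL]
      have := subset_convexHull ℝ (H : Set (↥Fp → W)) hh
      rw [← hH] at this
      exact this.2
    exact this
  choose! ψ hψ using hHrange
  refine ⟨H.image ψ, ?_⟩
  have himg2 : φ '' (convexHull ℝ ((H.image ψ : Finset (V →ᵃ[ℝ] W)) : Set (V →ᵃ[ℝ] W))) =
      convexHull ℝ (H : Set (↥Fp → W)) := by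
    rw [φ.image_convexHull]
    congr 1
    ext x
    constructor
    · rintro ⟨f, hf, rfl⟩
      simp only [Finset.coe_image, Set.mem_image, Finset.mem_coe] at hf
      obtain ⟨h, hh, rfl⟩ := hf
      rw [hψ h hh]
      exact hh
    · intro hx
      refine ⟨ψ x, ?_, hψ x hx⟩
      simp only [Finset.coe_image, Set.mem_image, Finset.mem_coe]
      exact ⟨x, hx, rfl⟩
  rw [← himg2] at himg
  exact Set.image_injective.mpr hinj himg
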